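/- The folding dynamics G is regular on the phase space X = 𝔠_N × ⟦−N,N⟧^ℕ: for every point X = (C,F) ∈ X and every ε > 0, there exists a point X̃ ∈ X with d(X, X̃) < ε and an integer n ≥ 1 such that G^n(X̃) = X̃. In other words, the set of periodic points of G is dense in (X, d). -/

import Mathlib

open scoped BigOperators

namespace HP

/-- A conformation of `N+1` residues in absolute encoding
(the initial residue, always `0`, is omitted): `C k` is the paper's `C_{k+1}`. -/
abbrev Conf (N : ℕ) := Fin N → ZMod 4

open Classical in
/-- `δ(a,b) = 0` if `a = b`, `1` otherwise. -/
noncomputable def delta {α : Type*} (a b : α) : ℝ := if a = b then 0 else 1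

/-- `d_C(C,Č) = Σ_{k=1}^N δ(C_k,Č_k)·2^{N−k}`. -/
noncomputable def dC (N : ℕ) (C C' : Conf N) : ℝ :=
  ∑ k : Fin N, delta (C k) (C' k) * (2 : ℝ) ^ (N - 1 - (k : ℕ))

/-- `d_F(F,F̌) = (9/(2N))·Σ_{k=0}^∞ |F^k − F̌^k|/10^{k+1}`. -/
noncomputable def dF (N : ℕ) (F F' : ℕ → ℤ) : ℝ :=
  (9 / (2 * (N : ℝ))) * ∑' k : ℕ, |((F k : ℝ)) - ((F' k : ℝ))| / 10 ^ (k + 1)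

/-- `d((C,F),(Č,F̌)) = d_C(C,Č) + d_F(F,F̌)`. -/
noncomputable def distX (N : ℕ) (X Y : Conf N × (ℕ → ℤ)) : ℝ :=
  dC N X.1 Y.1 + dF N X.2 Y.2

/-- A folding sequence takes values in `⟦−N,N⟧`. -/
def validSeq (N : ℕ) (F : ℕ → ℤ) : Prop := ∀ k, |F k| ≤ (N : ℤ)

/-- The fold map `f_k`: residues with (paper) index `≥ |k|` are rotated by
`f^{sign k}` where `f x = x + 1` (in `ℤ/4ℤ`); `f_0 = id`. -/
def foldMap (N : ℕ) (k : ℤ) (C : Conf N) : Conf N :=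
  fun j => if ((j : ℕ) : ℤ) + 1 < |k| then C j else C j + (Int.sign k : ZMod 4)

/-- The folding dynamics `G(C,F) = (f_{i(F)}(C), σ(F))`. -/
def G (N : ℕ) : Conf N × (ℕ → ℤ) → Conf N × (ℕ → ℤ) :=
  fun X => (foldMap N (X.2 0) X.1, fun n => X.2 (n + 1))

/-- The shift `σ` on folding sequences. -/
def shiftF (F : ℕ → ℤ) : ℕ → ℤ := fun k => F (k + 1)

/-- Unit move in the 2D lattice associated with an absolute encoding letter. -/
def step (c : ZMod 4) : ℤ × ℤ :=
  if c = 0 then (1, 0) else if c = 1 then (0, -1) else if c = 2 then (-1, 0) else (0, 1)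

/-- `pos N C i` is the lattice point `X_i` of the 2D representation `p(C)`. -/
def pos (N : ℕ) (C : Conf N) : ℕ → ℤ × ℤ
  | 0 => (0, 0)
  | i + 1 => pos N C i + (if h : i < N then step (C ⟨i, h⟩) else 0)

/-- The SAW requirement: the lattice points `X_0, …, X_N` are pairwise distinct. -/
def SAW (N : ℕ) (C : Conf N) : Prop :=
  ∀ i j : ℕ, i ≤ N → j ≤ N → pos N C i = pos N C j → i = j

/-- Successive application of fold maps `f_{k_1}, …, f_{k_n}`. -/
def folds (N : ℕ) : Conf N → List ℤ → Conf N
  | C, [] => C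
  | C, k :: t => folds N (foldMap N k C) t

/-- The set `𝔠_N` of acceptable conformations: obtained from `(0,…,0)` by a
nonempty sequence of folds in `⟦−N,N⟧`, all intermediate conformations
(including the initial and final ones) satisfying the SAW requirement. -/
def acceptable (N : ℕ) (C : Conf N) : Prop :=
  ∃ L : List ℤ, L ≠ [] ∧ (∀ k ∈ L, |k| ≤ (N : ℤ)) ∧
    folds N (fun _ => 0) L = C ∧
    ∀ p : List ℤ, p <+: L → SAW N (folds N (fun _ => 0) p)

/-- Membership in the phase space `X = 𝔠_N × ⟦−N,N⟧^ℕ`. -/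
def inX (N : ℕ) (X : Conf N × (ℕ → ℤ)) : Prop :=
  acceptable N X.1 ∧ validSeq N X.2

/-- `U` is open in the metric space `(X, d)` (relative topology on `𝔠_N × ⟦−N,N⟧^ℕ`). -/
def openIn (N : ℕ) (U : Set (Conf N × (ℕ → ℤ))) : Prop :=
  ∀ x ∈ U, ∃ ε > (0 : ℝ), ∀ y, inX N y → distX N x y < ε → y ∈ U

/-- `A` is closed in the metric space `(X, d)` (relative topology). -/
def closedIn (N : ℕ) (A : Set (Conf N × (ℕ → ℤ))) : Prop :=
  ∀ x, inX N x → x ∉ A → ∃ ε > (0 : ℝ), ∀ y, inX N y → distX N x y < ε → y ∉ A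

lemma foldMap_neg_foldMap (N : ℕ) (k : ℤ) (C : Conf N) :
    foldMap N (-k) (foldMap N k C) = C := by
  funext j
  simp only [foldMap, abs_neg]
  split
  · rfl
  · simp [Int.sign_neg]

lemma folds_append (N : ℕ) (C : Conf N) (L M : List ℤ) :
    folds N C (L ++ M) = folds N (folds N C L) M := by
  induction L generalizing C with
  | nil => rfl
  | cons k t ih => simp [folds, ih]

lemma folds_inv (N : ℕ) (C : Conf N) (L : List ℤ) :
    folds N (folds N C L) ((L.map (fun x => -x)).reverse) = C := by
  induction L generalizing C with
  | nil => rfl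
  | cons k t ih =>
    simp only [folds, List.map_cons, List.reverse_cons]
    rw [folds_append, ih, folds, folds, foldMap_neg_foldMap]

lemma iterate_G (N : ℕ) (n : ℕ) (C : Conf N) (F : ℕ → ℤ) :
    (G N)^[n] (C, F) = (folds N C ((List.range n).map F), fun k => F (k + n)) := by
  induction n generalizing C F with
  | zero => simp [folds]
  | succ n ih =>
    rw [Function.iterate_succ_apply]
    show (G N)^[n] (foldMap N (F 0) C, fun k => F (k + 1)) = _
    rw [ih]
    have hl : (List.range (n + 1)).map F
        = F 0 :: (List.range n).map (fun k => F (k + 1)) := by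
      rw [List.range_succ_eq_map]
      simp [Function.comp_def, Nat.succ_eq_add_one, Nat.add_comm]
    rw [hl, folds]
    refine Prod.ext rfl ?_
    funext k
    simp [Nat.add_assoc, Nat.add_comm 1 n]

set_option maxHeartbeats 1000000 in
/-- `G` is regular on `X = 𝔠_N × ⟦−N,N⟧^ℕ`: the periodic points
of `G` are dense in `(X, d)`. -/
theorem G_regular (N : ℕ) (hN : 1 ≤ N) :
    ∀ X : Conf N × (ℕ → ℤ), inX N X → ∀ ε > (0 : ℝ),
      ∃ Y : Conf N × (ℕ → ℤ), inX N Y ∧ distX N X Y < ε ∧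
        ∃ n : ℕ, 1 ≤ n ∧ (G N)^[n] Y = Y := by
  intro X hX ε hε
  obtain ⟨m₀, hm₀⟩ := exists_pow_lt_of_lt_one hε (by norm_num : (1:ℝ)/10 < 1)
  set m : ℕ := max m₀ 1 with hm
  have hm1 : 1 ≤ m := le_max_right _ _
  have hmm₀ : m₀ ≤ m := le_max_left _ _
  set F : ℕ → ℤ := X.2 with hF
  set L : List ℤ := (List.range m).map F with hL
  set P : List ℤ := L ++ (L.map (fun x => -x)).reverse with hP
  have hLlen : L.length = m := by simp [hL]
  have hPlen : P.length = 2 * m := by simp [hP, hL]; ring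
  have h2m : 0 < 2 * m := by omega
  set Ft : ℕ → ℤ := fun k => P.getD (k % (2 * m)) 0 with hFt
  -- every element of P has absolute value ≤ N
  have hmemP : ∀ x ∈ P, |x| ≤ (N : ℤ) := by
    intro x hx
    rw [hP] at hx
    rcases List.mem_append.1 hx with h | h
    · obtain ⟨i, _, rfl⟩ := List.mem_map.1 h
      exact hX.2 i
    · obtain ⟨y, hy, rfl⟩ := List.mem_map.1 (List.mem_reverse.1 h)
      obtain ⟨i, _, rfl⟩ := List.mem_map.1 hy
      simpa using hX.2 i
  have hFtval : validSeq N Ft := by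
    intro k
    have hlt : k % (2 * m) < P.length := by rw [hPlen]; exact Nat.mod_lt _ h2m
    have : Ft k ∈ P := by
      rw [hFt]
      simp only [List.getD_eq_getElem _ _ hlt]
      exact List.getElem_mem _
    exact hmemP _ this
  -- Ft agrees with F on k < m
  have hagree : ∀ k < m, Ft k = F k := by
    intro k hk
    have hk2 : k < 2 * m := by omega
    have hkL : k < L.length := hLlen ▸ hk
    have hkP : k < P.length := hPlen ▸ hk2
    rw [hFt]
    show P.getD (k % (2 * m)) 0 = F k
    rw [Nat.mod_eq_of_lt hk2, hP, List.getD_append _ _ _ _ hkL]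
    have hkm : k < m := hk
    simp [hL, List.getD, List.getElem?_range hkm]
  -- the first 2m values of Ft form P
  have hmap : (List.range (2 * m)).map Ft = P := by
    refine List.ext_getElem (by simp [hPlen]) ?_
    intro i h1 h2
    have hi : i < 2 * m := by simpa using h1
    simp only [List.getElem_map, List.getElem_range]
    rw [hFt]
    show P.getD (i % (2 * m)) 0 = P[i]
    rw [Nat.mod_eq_of_lt hi, List.getD_eq_getElem _ _ h2]
  -- folding along P returns to the start
  have hfold : folds N X.1 P = X.1 := by
    rw [hP, folds_append, folds_inv]
  -- periodicity of Ft
  have hper : (fun k => Ft (k + 2 * m)) = Ft := by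
    funext k
    simp [hFt, Nat.add_mod_right]
  clear_value Ft P L
  refine ⟨(X.1, Ft), ⟨hX.1, hFtval⟩, ?_, 2 * m, by omega, ?_⟩
  · -- distance estimate
    have hdC : dC N X.1 X.1 = 0 := by
      simp [dC, delta]
    have hN0 : (0:ℝ) < (N : ℝ) := by exact_mod_cast hN
    -- termwise bounds
    set t : ℕ → ℝ := fun k => |((F k : ℝ)) - ((Ft k : ℝ))| / 10 ^ (k + 1) with ht
    have htnn : ∀ k, 0 ≤ t k := fun k => by positivity
    have htle : ∀ k, t k ≤ (2 * N) / 10 ^ (k + 1) := by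
      intro k
      apply div_le_div_of_nonneg_right _ (by positivity)
      have h1 : |((F k : ℝ))| ≤ (N : ℝ) := by
        have := hX.2 k; exact_mod_cast (by exact_mod_cast this : |((F k : ℝ))| ≤ (N:ℝ))
      have h2 : |((Ft k : ℝ))| ≤ (N : ℝ) := by
        have := hFtval k; exact_mod_cast this
      calc |((F k : ℝ)) - ((Ft k : ℝ))| ≤ |((F k : ℝ))| + |((Ft k : ℝ))| :=
            abs_sub _ _
        _ ≤ 2 * N := by linarith
    have hgeo : Summable (fun k : ℕ => (2 * (N:ℝ)) / 10 ^ (k + 1)) := by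
      have hs1 : Summable (fun k : ℕ => ((1:ℝ)/10) ^ k) :=
        summable_geometric_of_lt_one (by norm_num) (by norm_num)
      have hs2 := hs1.mul_left ((2 * (N:ℝ)) / 10)
      apply hs2.congr
      intro k
      rw [pow_succ]
      field_simp
      rw [← mul_pow]; norm_num
    have hts : Summable t := Summable.of_nonneg_of_le htnn htle hgeo
    have hzero : ∀ k < m, t k = 0 := by
      intro k hk
      simp [ht, hagree k hk]
    -- bound the tail sum
    have hshift : ∑' k, t k = ∑' k, t (k + m) := by
      rw [← Summable.sum_add_tsum_nat_add m hts]
      have : ∑ i ∈ Finset.range m, t i = 0 :=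
        Finset.sum_eq_zero fun i hi => hzero i (Finset.mem_range.1 hi)
      rw [this, zero_add]
    have htail : ∑' k, t (k + m) ≤ ∑' k, (2 * (N:ℝ)) / 10 ^ (k + m + 1) := by
      refine Summable.tsum_le_tsum (fun k => htle (k + m)) ((summable_nat_add_iff m).2 hts) ?_
      exact (summable_nat_add_iff m).2 hgeo
    have hval : ∑' k : ℕ, (2 * (N:ℝ)) / 10 ^ (k + m + 1)
        = (2 * (N:ℝ)) / (9 * 10 ^ m) := by
      have heq : ∀ k : ℕ, (2 * (N:ℝ)) / 10 ^ (k + m + 1)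
          = ((2 * (N:ℝ)) / 10 ^ (m + 1)) * ((1:ℝ)/10) ^ k := by
        intro k
        rw [div_pow, one_pow, pow_add, pow_add]
        field_simp
        ring
      rw [tsum_congr heq, tsum_mul_left,
        tsum_geometric_of_lt_one (by norm_num) (by norm_num)]
      rw [pow_succ]
      field_simp
      ring
    have hsum : ∑' k, t k ≤ (2 * (N:ℝ)) / (9 * 10 ^ m) := by
      rw [hshift]; rw [← hval]; exact htail
    have hdF : dF N X.2 Ft ≤ ((1:ℝ)/10) ^ m := by
      have h9 : (0:ℝ) ≤ 9 / (2 * (N:ℝ)) := by positivity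
      calc dF N X.2 Ft = (9 / (2 * (N:ℝ))) * ∑' k, t k := rfl
        _ ≤ (9 / (2 * (N:ℝ))) * ((2 * (N:ℝ)) / (9 * 10 ^ m)) :=
            mul_le_mul_of_nonneg_left hsum h9
        _ = ((1:ℝ)/10) ^ m := by
            rw [div_pow, one_pow]
            field_simp
    have : ((1:ℝ)/10) ^ m ≤ ((1:ℝ)/10) ^ m₀ :=
      pow_le_pow_of_le_one (by norm_num) (by norm_num) hmm₀
    calc distX N X (X.1, Ft) = dC N X.1 X.1 + dF N X.2 Ft := rfl
      _ = dF N X.2 Ft := by rw [hdC, zero_add]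
      _ ≤ ((1:ℝ)/10) ^ m := hdF
      _ ≤ ((1:ℝ)/10) ^ m₀ := this
      _ < ε := hm₀
  · -- periodicity
    rw [iterate_G, hmap, hfold, hper]

end HP
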